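/- Define f_n(x) = ∑_{k=1}^{n} |sin(kπx)|/k. For every rational number p/q in lowest terms with q ≥ 1 and every n ≥ q², the function f_n has a strict local minimum at x = p/q. -/

import Mathlib

noncomputable def f (n : ℕ) (x : ℝ) : ℝ :=
  ∑ k ∈ Finset.Icc 1 n, |Real.sin (k * Real.pi * x)| / k

open Real Finset

lemma sign_mul_self_eq_abs (r : ℝ) : Real.sign r * r = |r| := by
  rcases lt_trichotomy r 0 with h | h | h
  · rw [Real.sign_of_neg h, abs_of_neg h]; ring
  · simp [h]
  · rw [Real.sign_of_pos h, abs_of_pos h]; ring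

lemma abs_sign_le_one (r : ℝ) : |Real.sign r| ≤ 1 := by
  rcases Real.sign_apply_eq r with h | h | h <;> simp [h]

lemma sign_neg_one_mul (ε s : ℝ) (hε : ε = 1 ∨ ε = -1) :
    Real.sign (ε * s) = ε * Real.sign s := by
  rcases hε with h | h <;> subst h
  · simp
  · simp [Real.sign_neg]

lemma aux_sin_sub_pos {h : ℝ} (h0 : 0 ≤ h) (h1 : h ≤ 1) : |Real.sin h - h| ≤ h ^ 3 / 4 := by
  rcases eq_or_lt_of_le h0 with rfl | hp
  · simp
  · have h2 := Real.sin_le h0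
    have h3 : h - h ^ 3 / 4 < Real.sin h := by
      have := Real.sin_gt_sub_cube hp
      have : 0 ≤ h ^ 3 := by positivity
      linarith
    rw [abs_of_nonpos (by linarith)]
    linarith

lemma abs_sin_sub_le {h : ℝ} (hh : |h| ≤ 1) : |Real.sin h - h| ≤ |h| ^ 3 / 4 := by
  rcases le_or_gt 0 h with h0 | h0
  · rw [abs_of_nonneg h0] at hh ⊢; exact aux_sin_sub_pos h0 hh
  · have h0' : 0 ≤ -h := by linarith
    rw [abs_of_neg h0] at hh ⊢
    have := aux_sin_sub_pos h0' hh
    rw [Real.sin_neg] at this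
    calc |Real.sin h - h| = |Real.sin (-h) - (-h)| := by
          rw [Real.sin_neg, ← abs_neg]; ring_nf
      _ ≤ (-h) ^ 3 / 4 := by rw [Real.sin_neg] at *; exact this
      _ = (-h) ^ 3 / 4 := rfl

lemma abs_sin_ge {h : ℝ} (hh : |h| ≤ 1) : |h| - |h| ^ 3 / 4 ≤ |Real.sin h| := by
  have h1 : Real.sin |h| ≤ |Real.sin h| := by
    rcases le_or_gt 0 h with h0 | h0
    · rw [abs_of_nonneg h0]; exact le_abs_self _
    · rw [abs_of_neg h0, Real.sin_neg, ← abs_neg]; exact le_abs_self _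
  rcases eq_or_lt_of_le (abs_nonneg h) with h0 | h0
  · simp [← h0]
  · have : |h| - |h| ^ 3 / 4 < Real.sin |h| := by
      have := Real.sin_gt_sub_cube h0
      have : 0 ≤ |h| ^ 3 := by positivity
      linarith
    linarith

lemma shift_block (g : ℕ → ℝ) (q : ℕ) (hper : ∀ k, g (k + q) = g k) (m : ℕ) :
    ∑ j ∈ Finset.range q, g (m + j) = ∑ j ∈ Finset.range q, g j := by
  induction m with
  | zero => simp
  | succ m ih =>
    have h1 : ∑ j ∈ Finset.range q, g (m + 1 + j) = ∑ j ∈ Finset.range q, g (m + (j + 1)) := by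
      apply Finset.sum_congr rfl; intro j _; congr 1; omega
    have h2 : ∑ j ∈ Finset.range (q + 1), g (m + j)
        = (∑ j ∈ Finset.range q, g (m + (j + 1))) + g (m + 0) :=
      Finset.sum_range_succ' (fun j => g (m + j)) q
    have h3 : ∑ j ∈ Finset.range (q + 1), g (m + j)
        = (∑ j ∈ Finset.range q, g (m + j)) + g (m + q) := Finset.sum_range_succ _ q
    have h4 : g (m + q) = g m := hper m
    rw [h1]
    have h5 : g (m + 0) = g m := by norm_num
    have : (∑ j ∈ Finset.range q, g (m + (j + 1))) = ∑ j ∈ Finset.range q, g (m + j) := by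
      linarith [h2, h3, h4, h5]
    rw [this, ih]

lemma sum_mod (g : ℕ → ℝ) (q : ℕ) (hq : 0 < q) (hper : ∀ k, g (k + q) = g k)
    (hz : ∑ j ∈ Finset.range q, g j = 0) (n : ℕ) :
    ∑ j ∈ Finset.range n, g j = ∑ j ∈ Finset.range (n % q), g j := by
  induction n using Nat.strong_induction_on with
  | _ n ih =>
    by_cases hlt : n < q
    · rw [Nat.mod_eq_of_lt hlt]
    · push_neg at hlt
      have hn : n = (n - q) + q := by omega
      rw [hn, Finset.sum_range_add]
      rw [shift_block g q hper (n - q), hz, add_zero]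
      rw [ih (n - q) (by omega)]
      have hmod : (n - q + q) % q = (n - q) % q := Nat.add_mod_right _ _
      rw [hmod]

lemma abs_sin_add_int_mul_pi (x : ℝ) (m : ℤ) : |Real.sin (x + m * Real.pi)| = |Real.sin x| := by
  rw [Real.sin_add_int_mul_pi, abs_mul]
  rcases Int.even_or_odd m with h | h
  · rw [h.neg_one_zpow]; simp
  · rw [h.neg_one_zpow]; simp

set_option maxHeartbeats 4000000 in
theorem stmt_7 (p : ℤ) (q : ℕ) (hq : 1 ≤ q) (hpq : Int.gcd p q = 1)
    (n : ℕ) (hn : q ^ 2 ≤ n) :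
    ∃ δ > 0, ∀ x : ℝ, 0 < |x - (p : ℝ) / q| → |x - (p : ℝ) / q| < δ →
      f n ((p : ℝ) / q) < f n x := by
  have hq0 : 0 < q := hq
  have hqR : (0:ℝ) < q := by exact_mod_cast hq0
  have hn1 : 1 ≤ n := le_trans (Nat.one_le_iff_ne_zero.mpr (by positivity)) hn
  have hnR : (0:ℝ) < n := by exact_mod_cast hn1
  set α : ℝ := (p : ℝ) / q with hα
  clear_value α
  -- the sign-weighted cosine sequence
  set g : ℕ → ℝ := fun k => Real.sign (Real.sin (k * π * α)) * Real.cos (k * π * α) with hg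
  clear_value g
  have hθadd : ∀ k : ℕ, ((k + q : ℕ) : ℝ) * π * α = k * π * α + p * π := by
    intro k
    push_cast
    rw [hα]
    field_simp
  obtain ⟨ε, hε, hsinε, hcosε⟩ :
      ∃ ε : ℝ, (ε = 1 ∨ ε = -1) ∧ (∀ x : ℝ, Real.sin (x + p * π) = ε * Real.sin x)
        ∧ (∀ x : ℝ, Real.cos (x + p * π) = ε * Real.cos x) := by
    refine ⟨(-1 : ℝ) ^ p, ?_, fun x => Real.sin_add_int_mul_pi x p,
      fun x => Real.cos_add_int_mul_pi x p⟩
    rcases Int.even_or_odd p with h | h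
    · left; exact h.neg_one_zpow
    · right; exact h.neg_one_zpow
  have hε2 : ε * ε = 1 := by rcases hε with h | h <;> simp [h]
  have hgper : ∀ k, g (k + q) = g k := by
    intro k
    simp only [hg]
    rw [hθadd k, hsinε, hcosε, sign_neg_one_mul ε _ hε]
    rcases hε with h | h <;> subst h <;> ring
  have hg0 : g 0 = 0 := by simp [hg]
  have hgabs : ∀ k, |g k| ≤ 1 := by
    intro k
    simp only [hg]
    rw [abs_mul]
    exact mul_le_one₀ (abs_sign_le_one _) (abs_nonneg _) (Real.abs_cos_le_one _)
  have hθrefl : ∀ j : ℕ, j ≤ q → ((q - j : ℕ) : ℝ) * π * α = p * π + -(j * π * α) := by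
    intro j hj
    rw [Nat.cast_sub hj, hα]
    field_simp
    ring
  have hgrefl : ∀ j : ℕ, j ≤ q → g (q - j) = -g j := by
    intro j hj
    simp only [hg]
    rw [hθrefl j hj]
    have h1 : Real.sin (p * π + -(j * π * α)) = ε * -Real.sin (j * π * α) := by
      rw [add_comm, hsinε, Real.sin_neg]
    have h2 : Real.cos (p * π + -(j * π * α)) = ε * Real.cos (j * π * α) := by
      rw [add_comm, hcosε, Real.cos_neg]
    rw [h1, h2]
    have : ε * -Real.sin (j * π * α) = (-ε) * Real.sin (j * π * α) := by ring
    rw [this, sign_neg_one_mul (-ε) _ (by rcases hε with h | h <;> simp [h])]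
    rcases hε with h | h <;> subst h <;> ring
  have hz : ∑ j ∈ Finset.range q, g j = 0 := by
    have hgq : g q = 0 := by
      have := hgrefl 0 (Nat.zero_le q)
      simpa [hg0] using this
    have hrefl : ∑ j ∈ Finset.range q, g (q - j) = ∑ j ∈ Finset.range q, g j := by
      have h1 : ∑ j ∈ Finset.range q, g (q - (q - 1 - j)) = ∑ j ∈ Finset.range q, g (q - j) :=
        Finset.sum_range_reflect (fun j => g (q - j)) q
      have h2 : ∑ j ∈ Finset.range q, g (q - (q - 1 - j)) = ∑ j ∈ Finset.range q, g (j + 1) := by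
        apply Finset.sum_congr rfl
        intro j hj
        rw [Finset.mem_range] at hj
        congr 1
        omega
      have h3 : ∑ j ∈ Finset.range q, g (j + 1)
          = (∑ j ∈ Finset.range q, g j) + g q - g 0 := by
        have := Finset.sum_range_succ' g q
        have := Finset.sum_range_succ g q
        linarith
      rw [← h1, h2, h3, hgq, hg0]
      ring
    have hneg : ∑ j ∈ Finset.range q, g (q - j) = -∑ j ∈ Finset.range q, g j := by
      rw [← Finset.sum_neg_distrib]
      apply Finset.sum_congr rfl
      intro j hj
      rw [Finset.mem_range] at hj
      exact hgrefl j hj.le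
    rw [hneg] at hrefl
    linarith
  -- bound for the full derivative-like sum
  have hSig : |∑ k ∈ Finset.Icc 1 n, g k| ≤ (q : ℝ) - 1 := by
    have hins : Finset.range (n + 1) = insert 0 (Finset.Icc 1 n) := by
      ext k
      simp only [Finset.mem_range, Finset.mem_insert, Finset.mem_Icc]
      omega
    have h0 : (0 : ℕ) ∉ Finset.Icc 1 n := by simp
    have hsum : ∑ k ∈ Finset.range (n + 1), g k = ∑ k ∈ Finset.Icc 1 n, g k := by
      rw [hins, Finset.sum_insert h0, hg0, zero_add]
    rw [← hsum, sum_mod g q hq0 hgper hz (n + 1)]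
    set r := (n + 1) % q with hr
    have hrq : r < q := Nat.mod_lt _ hq0
    calc |∑ j ∈ Finset.range r, g j| ≤ ∑ j ∈ Finset.range r, |g j| :=
          Finset.abs_sum_le_sum_abs _ _
      _ ≤ ∑ j ∈ Finset.range r, (1 : ℝ) := Finset.sum_le_sum (fun j _ => hgabs j)
      _ = (r : ℝ) := by simp
      _ ≤ (q : ℝ) - 1 := by
          have : (r : ℝ) ≤ (q : ℝ) - 1 := by
            have : r ≤ q - 1 := by omega
            have h' : ((q - 1 : ℕ) : ℝ) = (q : ℝ) - 1 := by
              rw [Nat.cast_sub hq]; norm_num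
            calc (r : ℝ) ≤ ((q - 1 : ℕ) : ℝ) := by exact_mod_cast this
              _ = (q : ℝ) - 1 := h'
          exact this
  -- g vanishes on multiples of q
  have hgmul : ∀ k : ℕ, q ∣ k → g k = 0 := by
    rintro k ⟨j, hj⟩
    have hθ : (k : ℝ) * π * α = ((j * p : ℤ) : ℝ) * π := by
      subst hj
      push_cast
      rw [hα]
      field_simp
    simp only [hg]
    rw [hθ, Real.sin_int_mul_pi, Real.sign_zero, zero_mul]
  -- sin is nonzero off multiples of q
  have hsne : ∀ k : ℕ, ¬ q ∣ k → Real.sin ((k : ℝ) * π * α) ≠ 0 := by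
    intro k hk h
    rw [Real.sin_eq_zero_iff] at h
    obtain ⟨m, hm⟩ := h
    have hπ : (π : ℝ) ≠ 0 := Real.pi_ne_zero
    have hq' : (q : ℝ) ≠ 0 := ne_of_gt hqR
    have hc : α * q = p := by rw [hα]; field_simp
    have h1 : (m : ℝ) * q = k * p := by
      apply mul_right_cancel₀ hπ
      calc (m : ℝ) * q * π = (m * π) * q := by ring
        _ = ((k : ℝ) * π * α) * q := by rw [hm]
        _ = (k : ℝ) * π * (α * q) := by ring
        _ = (k : ℝ) * π * p := by rw [hc]
        _ = (k : ℝ) * p * π := by ring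
    have h2 : (m : ℤ) * q = k * p := by exact_mod_cast h1
    have hdvd : (q : ℤ) ∣ (k : ℤ) * p := ⟨m, by linarith [h2]⟩
    have hcop : IsCoprime (q : ℤ) (p : ℤ) := by
      rw [Int.isCoprime_iff_gcd_eq_one, Int.gcd_comm]
      exact_mod_cast hpq
    have : (q : ℤ) ∣ (k : ℤ) := hcop.dvd_of_dvd_mul_right hdvd
    exact hk (by exact_mod_cast this)
  -- count of multiples of q
  set D : Finset ℕ := (Finset.Icc 1 n).filter (fun k => q ∣ k) with hD
  clear_value D
  have hDcard : q ≤ D.card := by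
    have hsub : (Finset.Icc 1 q).image (fun j => j * q) ⊆ D := by
      intro x hx
      rw [Finset.mem_image] at hx
      obtain ⟨j, hj, rfl⟩ := hx
      rw [Finset.mem_Icc] at hj
      rw [hD, Finset.mem_filter, Finset.mem_Icc]
      refine ⟨⟨Nat.one_le_iff_ne_zero.mpr (Nat.mul_ne_zero (by omega) (by omega)), ?_⟩,
        ⟨j, mul_comm j q⟩⟩
      calc j * q ≤ q * q := Nat.mul_le_mul hj.2 le_rfl
        _ = q ^ 2 := (sq q).symm
        _ ≤ n := hn
    have hinj : Set.InjOn (fun j => j * q) (Finset.Icc 1 q) := by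
      intro a _ b _ hab
      exact Nat.eq_of_mul_eq_mul_right hq0 hab
    calc q = (Finset.Icc 1 q).card := by rw [Nat.card_Icc]; omega
      _ = ((Finset.Icc 1 q).image (fun j => j * q)).card :=
          (Finset.card_image_of_injOn hinj).symm
      _ ≤ D.card := Finset.card_le_card hsub
  have hπ : (0:ℝ) < π := Real.pi_pos
  have hn1R : (1:ℝ) ≤ n := by exact_mod_cast hn1
  set C : ℝ := π ^ 3 * n ^ 3 / 4 + π ^ 2 * n ^ 2 / 2 with hC
  clear_value C
  have hCpos : 0 < C := by rw [hC]; positivity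
  refine ⟨min (1 / (π * n)) (π / (C + 1)), lt_min (by positivity) (by positivity), ?_⟩
  intro x ht0 htδ
  set t := x - α with htdef
  clear_value t
  have ht1 : |t| < 1 / (π * n) := lt_of_lt_of_le htδ (min_le_left _ _)
  have ht2 : |t| < π / (C + 1) := lt_of_lt_of_le htδ (min_le_right _ _)
  have htle1 : |t| ≤ 1 := by
    have h1 : 1 / (π * n) ≤ 1 := by
      rw [div_le_one (by positivity)]
      nlinarith [Real.pi_gt_three]
    linarith
  have hhle : ∀ k : ℕ, 1 ≤ k → k ≤ n → |(k:ℝ) * π * t| ≤ 1 := by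
    intro k hk1 hk2
    have hkn : (k:ℝ) ≤ n := by exact_mod_cast hk2
    have hk0 : (0:ℝ) < k := by exact_mod_cast hk1
    have habs : |(k:ℝ) * π * t| = k * π * |t| := by
      rw [abs_mul, abs_of_nonneg (by positivity : (0:ℝ) ≤ (k:ℝ) * π)]
    rw [habs]
    have h2 : (k:ℝ) * π * |t| ≤ n * π * |t| := by gcongr
    have h3 : (n:ℝ) * π * |t| ≤ n * π * (1 / (π * n)) := by gcongr
    have h4 : (n:ℝ) * π * (1 / (π * n)) = 1 := by field_simp
    linarith
  -- the per-term estimate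
  have hkey : ∀ k ∈ Finset.Icc 1 n,
      (if q ∣ k then π * |t| else 0) + π * t * g k
        - (π ^ 3 * n ^ 2 * |t| ^ 3 / 4 + π ^ 2 * n * t ^ 2 / 2)
      ≤ |Real.sin (k * π * x)| / k - |Real.sin (k * π * α)| / k := by
    intro k hk
    rw [Finset.mem_Icc] at hk
    have hk0 : (0:ℝ) < k := by exact_mod_cast hk.1
    have hkn : (k:ℝ) ≤ n := by exact_mod_cast hk.2
    have hkn2 : (k:ℝ) ^ 2 ≤ (n:ℝ) ^ 2 := by nlinarith
    set h : ℝ := (k:ℝ) * π * t with hh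
    clear_value h
    have hargs : (k:ℝ) * π * x = k * π * α + h := by rw [hh, htdef]; ring
    have hhabs : |h| ≤ 1 := by rw [hh]; exact hhle k hk.1 hk.2
    have habs_h : |h| = k * π * |t| := by
      rw [hh, abs_mul, abs_of_nonneg (by positivity : (0:ℝ) ≤ (k:ℝ) * π)]
    have he1 : |h| ^ 3 = (k:ℝ) ^ 3 * π ^ 3 * |t| ^ 3 := by rw [habs_h]; ring
    by_cases hdvd : q ∣ k
    · -- multiple of q : the term contributes ≈ π|t|
      obtain ⟨j, hj⟩ := hdvd
      have hθk : (k:ℝ) * π * α = ((j * p : ℤ) : ℝ) * π := by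
        subst hj
        push_cast
        rw [hα]
        field_simp
      have hs0 : Real.sin ((k:ℝ) * π * α) = 0 := by rw [hθk]; exact Real.sin_int_mul_pi _
      have hsinx : |Real.sin ((k:ℝ) * π * x)| = |Real.sin h| := by
        rw [hargs, hθk, add_comm, abs_sin_add_int_mul_pi]
      have hge : |h| - |h| ^ 3 / 4 ≤ |Real.sin h| := abs_sin_ge hhabs
      have hdiv : (|h| - |h| ^ 3 / 4) / k = π * |t| - (k:ℝ) ^ 2 * π ^ 3 * |t| ^ 3 / 4 := by
        rw [he1, habs_h]
        field_simp
      have h5 : (|h| - |h| ^ 3 / 4) / k ≤ |Real.sin h| / k := by gcongr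
      have h6 : π * |t| - π ^ 3 * n ^ 2 * |t| ^ 3 / 4 ≤ (|h| - |h| ^ 3 / 4) / k := by
        rw [hdiv]
        have hmono : (k:ℝ) ^ 2 * π ^ 3 * |t| ^ 3 ≤ (n:ℝ) ^ 2 * π ^ 3 * |t| ^ 3 := by gcongr
        linarith
      rw [if_pos ⟨j, hj⟩, hgmul k ⟨j, hj⟩, hs0, abs_zero, zero_div, sub_zero, hsinx]
      have hE : (0:ℝ) ≤ π ^ 2 * n * t ^ 2 / 2 := by positivity
      linarith [h5, h6]
    · -- not a multiple : compare with the linearization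
      have hsθ : Real.sin ((k:ℝ) * π * α) ≠ 0 := hsne k hdvd
      set θ : ℝ := (k:ℝ) * π * α with hθdef
      clear_value θ
      set s : ℝ := Real.sign (Real.sin θ) with hs
      clear_value s
      have hssin : s * Real.sin θ = |Real.sin θ| := by rw [hs]; exact sign_mul_self_eq_abs _
      have hsabs : |s| ≤ 1 := by rw [hs]; exact abs_sign_le_one _
      have hgk : g k = s * Real.cos θ := by simp only [hg]; rw [hs, hθdef]
      have hstep1 : s * (Real.sin (θ + h) - Real.sin θ) ≤ |Real.sin (θ + h)| - |Real.sin θ| := by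
        have h1 : s * Real.sin (θ + h) ≤ |Real.sin (θ + h)| := by
          calc s * Real.sin (θ + h) ≤ |s * Real.sin (θ + h)| := le_abs_self _
            _ = |s| * |Real.sin (θ + h)| := abs_mul _ _
            _ ≤ 1 * |Real.sin (θ + h)| :=
                mul_le_mul_of_nonneg_right hsabs (abs_nonneg _)
            _ = |Real.sin (θ + h)| := one_mul _
        linarith [hssin]
      have hexpand : s * (Real.sin (θ + h) - Real.sin θ)
          = s * Real.cos θ * h + s * Real.cos θ * (Real.sin h - h)
            + (s * Real.sin θ) * (Real.cos h - 1) := by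
        rw [Real.sin_add]
        ring
      have hb1 : -(|h| ^ 3 / 4) ≤ s * Real.cos θ * (Real.sin h - h) := by
        have h1 : |s * Real.cos θ * (Real.sin h - h)| ≤ |h| ^ 3 / 4 := by
          rw [abs_mul, abs_mul]
          have h2 := abs_sin_sub_le hhabs
          have h3 := Real.abs_cos_le_one θ
          have h4 : |s| * |Real.cos θ| ≤ 1 := by
            calc |s| * |Real.cos θ| ≤ 1 * 1 := mul_le_mul hsabs h3 (abs_nonneg _) zero_le_one
              _ = 1 := one_mul 1
          calc |s| * |Real.cos θ| * |Real.sin h - h| ≤ 1 * (|h| ^ 3 / 4) :=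
                mul_le_mul h4 h2 (abs_nonneg _) zero_le_one
            _ = |h| ^ 3 / 4 := one_mul _
        linarith [neg_abs_le (s * Real.cos θ * (Real.sin h - h))]
      have hb2 : -(h ^ 2 / 2) ≤ (s * Real.sin θ) * (Real.cos h - 1) := by
        rw [hssin]
        have h1 : 1 - h ^ 2 / 2 ≤ Real.cos h := Real.one_sub_sq_div_two_le_cos
        have h2 : Real.cos h ≤ 1 := Real.cos_le_one h
        have h3 : |Real.sin θ| ≤ 1 := abs_le.mpr ⟨Real.neg_one_le_sin θ, Real.sin_le_one θ⟩
        have h4 : Real.cos h - 1 ≤ 0 := by linarith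
        have h5 : 1 * (Real.cos h - 1) ≤ |Real.sin θ| * (Real.cos h - 1) :=
          mul_le_mul_of_nonpos_right h3 h4
        linarith
      have hlin : s * Real.cos θ * h - |h| ^ 3 / 4 - h ^ 2 / 2
          ≤ |Real.sin (θ + h)| - |Real.sin θ| := by
        calc s * Real.cos θ * h - |h| ^ 3 / 4 - h ^ 2 / 2
            ≤ s * Real.cos θ * h + s * Real.cos θ * (Real.sin h - h)
              + (s * Real.sin θ) * (Real.cos h - 1) := by linarith [hb1, hb2]
          _ = s * (Real.sin (θ + h) - Real.sin θ) := hexpand.symm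
          _ ≤ |Real.sin (θ + h)| - |Real.sin θ| := hstep1
      have hdivk : (s * Real.cos θ * h - |h| ^ 3 / 4 - h ^ 2 / 2) / k
          = π * t * (s * Real.cos θ) - (k:ℝ) ^ 2 * π ^ 3 * |t| ^ 3 / 4
            - k * π ^ 2 * t ^ 2 / 2 := by
        rw [he1, hh]
        field_simp
      have h5 : (s * Real.cos θ * h - |h| ^ 3 / 4 - h ^ 2 / 2) / k
          ≤ (|Real.sin (θ + h)| - |Real.sin θ|) / k := by gcongr
      have h6 : π * t * g k - (π ^ 3 * n ^ 2 * |t| ^ 3 / 4 + π ^ 2 * n * t ^ 2 / 2)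
          ≤ (s * Real.cos θ * h - |h| ^ 3 / 4 - h ^ 2 / 2) / k := by
        rw [hdivk, hgk]
        have e1 : (k:ℝ) ^ 2 * π ^ 3 * |t| ^ 3 ≤ (n:ℝ) ^ 2 * π ^ 3 * |t| ^ 3 := by gcongr
        have e2 : (k:ℝ) * π ^ 2 * t ^ 2 ≤ (n:ℝ) * π ^ 2 * t ^ 2 := by gcongr
        linarith
      have h7 : (|Real.sin (θ + h)| - |Real.sin θ|) / k
          = |Real.sin ((k:ℝ) * π * x)| / k - |Real.sin θ| / k := by
        rw [hargs]
        ring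
      rw [if_neg hdvd]
      calc 0 + π * t * g k - (π ^ 3 * n ^ 2 * |t| ^ 3 / 4 + π ^ 2 * n * t ^ 2 / 2)
          = π * t * g k - (π ^ 3 * n ^ 2 * |t| ^ 3 / 4 + π ^ 2 * n * t ^ 2 / 2) := by ring
        _ ≤ (s * Real.cos θ * h - |h| ^ 3 / 4 - h ^ 2 / 2) / k := h6
        _ ≤ (|Real.sin (θ + h)| - |Real.sin θ|) / k := h5
        _ = _ := h7
  -- sum everything
  have hsplit : f n x - f n α = ∑ k ∈ Finset.Icc 1 n,
      (|Real.sin (k * π * x)| / k - |Real.sin (k * π * α)| / k) := by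
    rw [f, f, ← Finset.sum_sub_distrib]
  have hsum_le : ∑ k ∈ Finset.Icc 1 n,
      ((if q ∣ k then π * |t| else 0) + π * t * g k
        - (π ^ 3 * n ^ 2 * |t| ^ 3 / 4 + π ^ 2 * n * t ^ 2 / 2))
      ≤ f n x - f n α := by
    rw [hsplit]
    exact Finset.sum_le_sum hkey
  have hLHS : ∑ k ∈ Finset.Icc 1 n,
      ((if q ∣ k then π * |t| else 0) + π * t * g k
        - (π ^ 3 * n ^ 2 * |t| ^ 3 / 4 + π ^ 2 * n * t ^ 2 / 2))
      = (D.card : ℝ) * (π * |t|) + π * t * (∑ k ∈ Finset.Icc 1 n, g k)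
        - n * (π ^ 3 * n ^ 2 * |t| ^ 3 / 4 + π ^ 2 * n * t ^ 2 / 2) := by
    rw [Finset.sum_sub_distrib, Finset.sum_add_distrib]
    congr 1
    · congr 1
      · rw [← Finset.sum_filter, ← hD, Finset.sum_const, nsmul_eq_mul]
      · rw [← Finset.mul_sum]
    · rw [Finset.sum_const, nsmul_eq_mul, Nat.card_Icc]
      push_cast
      ring
  have hqD : (q:ℝ) ≤ (D.card : ℝ) := by exact_mod_cast hDcard
  have hSbound : -(π * |t| * ((q:ℝ) - 1)) ≤ π * t * (∑ k ∈ Finset.Icc 1 n, g k) := by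
    have h1 : |π * t * (∑ k ∈ Finset.Icc 1 n, g k)| ≤ π * |t| * ((q:ℝ) - 1) := by
      rw [abs_mul, abs_mul, abs_of_nonneg hπ.le]
      gcongr
    linarith [neg_abs_le (π * t * (∑ k ∈ Finset.Icc 1 n, g k))]
  have herr : (n:ℝ) * (π ^ 3 * n ^ 2 * |t| ^ 3 / 4 + π ^ 2 * n * t ^ 2 / 2) ≤ C * |t| ^ 2 := by
    rw [hC]
    have h1 : |t| ^ 3 ≤ |t| ^ 2 := by
      have := abs_nonneg t
      nlinarith [htle1]
    have h3 := mul_le_mul_of_nonneg_left h1 (by positivity : (0:ℝ) ≤ π ^ 3 * (n:ℝ) ^ 3 / 4)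
    have h2 : t ^ 2 = |t| ^ 2 := (sq_abs t).symm
    rw [h2]
    linarith [h3]
  have hfin : C * |t| ^ 2 < π * |t| := by
    have h1 : |t| * (C + 1) < π := (lt_div_iff₀ (by positivity)).mp ht2
    have h2 := mul_lt_mul_of_pos_left h1 ht0
    nlinarith [h2, sq_nonneg t, sq_abs t, abs_nonneg t]
  have hqterm : π * |t| * (q:ℝ) ≤ (D.card : ℝ) * (π * |t|) := by
    have h1 := mul_le_mul_of_nonneg_right hqD (by positivity : (0:ℝ) ≤ π * |t|)
    linarith
  have : 0 < f n x - f n α := by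
    have := hsum_le
    rw [hLHS] at this
    nlinarith [hSbound, herr, hfin, hqterm]
  linarith
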